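/- Let v ∈ ℝ⁴ satisfy η(v,v) = 1 and v₀ > 0 (a future-directed unit timelike vector). Then the matrix γ₀·(v·γ) ∈ M₄(ℂ) is Hermitian and positive definite. -/

import Mathlib

open Matrix Complex ComplexOrder

/-- The Dirac gamma matrix `γ₀ = diag(1,1,-1,-1)`. -/
noncomputable def γ0 : Matrix (Fin 4) (Fin 4) ℂ :=
  !![1, 0, 0, 0; 0, 1, 0, 0; 0, 0, -1, 0; 0, 0, 0, -1]

/-- The Dirac gamma matrix `γ₁`. -/
noncomputable def γ1 : Matrix (Fin 4) (Fin 4) ℂ :=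
  !![0, 0, 0, 1; 0, 0, 1, 0; 0, -1, 0, 0; -1, 0, 0, 0]

/-- The Dirac gamma matrix `γ₂`. -/
noncomputable def γ2 : Matrix (Fin 4) (Fin 4) ℂ :=
  !![0, 0, 0, -I; 0, 0, I, 0; 0, I, 0, 0; -I, 0, 0, 0]

/-- The Dirac gamma matrix `γ₃`. -/
noncomputable def γ3 : Matrix (Fin 4) (Fin 4) ℂ :=
  !![0, 0, 1, 0; 0, 0, 0, -1; -1, 0, 0, 0; 0, 1, 0, 0]

/-- `v·γ := v₀γ₀ + v₁γ₁ + v₂γ₂ + v₃γ₃`. -/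
noncomputable def vγ (v : Fin 4 → ℝ) : Matrix (Fin 4) (Fin 4) ℂ :=
  (v 0 : ℂ) • γ0 + (v 1 : ℂ) • γ1 + (v 2 : ℂ) • γ2 + (v 3 : ℂ) • γ3

/-- The Minkowski form `η(u,v) = u₀v₀ − u₁v₁ − u₂v₂ − u₃v₃` on `ℝ⁴`. -/
def mink (u v : Fin 4 → ℝ) : ℝ := u 0 * v 0 - u 1 * v 1 - u 2 * v 2 - u 3 * v 3

/-- If `v` is a future-directed unit timelike vector (`η(v,v) = 1`, `v₀ > 0`) then
`γ₀·(v·γ)` is Hermitian and positive definite. -/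
theorem statement2 (v : Fin 4 → ℝ) (hv : mink v v = 1) (hv0 : 0 < v 0) :
    (γ0 * vγ v).IsHermitian ∧ (γ0 * vγ v).PosDef := by
  have hexp : γ0 * vγ v =
      !![(v 0:ℂ), 0, v 3, v 1 - I*v 2;
         0, v 0, v 1 + I*v 2, -v 3;
         v 3, v 1 - I*v 2, v 0, 0;
         v 1 + I*v 2, -v 3, 0, v 0] := by
    ext i j
    fin_cases i <;> fin_cases j <;>
      simp [γ0, γ1, γ2, γ3, vγ, Matrix.mul_apply, Fin.sum_univ_four] <;> ring
  set M := γ0 * vγ v with hMdef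
  have hherm : M.IsHermitian := by
    rw [Matrix.IsHermitian, hexp]
    ext i j
    fin_cases i <;> fin_cases j <;>
      simp [Matrix.conjTranspose_apply, Complex.conj_ofReal] <;> ring
  have hvc : (v 0:ℂ)*v 0 - v 1*v 1 - v 2*v 2 - v 3*v 3 = 1 := by
    unfold mink at hv
    exact_mod_cast congrArg Complex.ofReal hv
  have key : M * M = ((2 * v 0 : ℝ) : ℂ) • M - 1 := by
    rw [hexp]
    ext i j
    fin_cases i <;> fin_cases j <;>
      simp [Matrix.mul_apply, Fin.sum_univ_four, Matrix.one_apply] <;>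
      first
        | ring1
        | linear_combination -hvc - ((v 2:ℝ):ℂ)^2 * Complex.I_sq
  have hMN : Mᴴ * M + 1 = ((2 * v 0 : ℝ) : ℂ) • M := by
    rw [hherm, key]; simp
  have hc0 : ((2 * v 0 : ℝ) : ℂ) ≠ 0 := by
    simp; linarith
  have hMeq : M = (((2 * v 0 : ℝ) : ℂ))⁻¹ • (Mᴴ * M + 1) := by
    rw [hMN, smul_smul, inv_mul_cancel₀ hc0, one_smul]
  have hPD : (Mᴴ * M + 1).PosDef :=
    Matrix.PosDef.posSemidef_add (posSemidef_conjTranspose_mul_self M) Matrix.PosDef.one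
  refine ⟨hherm, posDef_iff_dotProduct_mulVec.mpr ⟨hherm, fun ⦃x⦄ hx => ?_⟩⟩
  rw [hMeq, smul_mulVec, dotProduct_smul, smul_eq_mul]
  have hp := (posDef_iff_dotProduct_mulVec.mp hPD).2 hx
  have hcpos : (0:ℂ) < (((2 * v 0 : ℝ) : ℂ))⁻¹ := by
    rw [← Complex.ofReal_inv, Complex.zero_lt_real]
    positivity
  exact mul_pos hcpos hp
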